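/- If the induced measure m satisfies the horizontal balance equations, then B_h(r) = 0 for every r ∈ (0,1); and if m satisfies the vertical balance equations, then B_v(c) = 0 for every c ∈ (0,1). -/

import Mathlib

open Finset

/-- The index set `{-1, 0, 1}` for the jumps of the random walk. -/
def II : Finset ℤ := {-1, 0, 1}

/-- The measure on `ℕ × ℕ` induced by the set of geometric terms `Γ`
with coefficients `α`. -/
noncomputable def inducedMeasure (Γ : Set (ℝ × ℝ)) (α : ℝ × ℝ → ℝ) (i j : ℕ) : ℝ :=
  ∑' q : Γ, α q * (q : ℝ × ℝ).1 ^ i * (q : ℝ × ℝ).2 ^ j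

/-- The absolute-convergence assumption on the coefficients. -/
def AbsConv (Γ : Set (ℝ × ℝ)) (α : ℝ × ℝ → ℝ) : Prop :=
  Summable (fun q : Γ => |α q| * (1 - (q : ℝ × ℝ).1)⁻¹ * (1 - (q : ℝ × ℝ).2)⁻¹)

/-- The horizontal balance equations for a measure `m` on `ℕ × ℕ`. -/
def HorizontalBalance (p : ℤ → ℤ → ℝ) (h : ℤ → ℝ) (m : ℕ → ℕ → ℝ) : Prop :=
  ∀ i : ℕ, 1 ≤ i →
    m i 0 = (∑ s ∈ II, m ((i : ℤ) - s).toNat 1 * p s (-1)) +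
      ∑ s ∈ II, m ((i : ℤ) - s).toNat 0 * h s

/-- The vertical balance equations for a measure `m` on `ℕ × ℕ`. -/
def VerticalBalance (p : ℤ → ℤ → ℝ) (v : ℤ → ℝ) (m : ℕ → ℕ → ℝ) : Prop :=
  ∀ j : ℕ, 1 ≤ j →
    m 0 j = (∑ t ∈ II, m 1 ((j : ℤ) - t).toNat * p (-1) t) +
      ∑ t ∈ II, m 0 ((j : ℤ) - t).toNat * v t

/-- `B_h(r)`: the aggregate horizontal boundary balance of the terms of `Γ`
with first coordinate `r`. -/
noncomputable def Bh (p : ℤ → ℤ → ℝ) (h : ℤ → ℝ) (Γ : Set (ℝ × ℝ)) (α : ℝ × ℝ → ℝ)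
    (r : ℝ) : ℝ :=
  ∑' q : {q : ℝ × ℝ // q ∈ Γ ∧ q.1 = r},
    α q * ((∑ s ∈ II, (r ^ (1 - s).toNat * h s +
      r ^ (1 - s).toNat * (q : ℝ × ℝ).2 * p s (-1))) - r)

/-- `B_v(c)`: the aggregate vertical boundary balance of the terms of `Γ`
with second coordinate `c`. -/
noncomputable def Bv (p : ℤ → ℤ → ℝ) (v : ℤ → ℝ) (Γ : Set (ℝ × ℝ)) (α : ℝ × ℝ → ℝ)
    (c : ℝ) : ℝ :=
  ∑' q : {q : ℝ × ℝ // q ∈ Γ ∧ q.2 = c},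
    α q * ((∑ t ∈ II, (c ^ (1 - t).toNat * v t +
      (q : ℝ × ℝ).1 * c ^ (1 - t).toNat * p (-1) t)) - c)

open Filter Topology

/-- Key analytic lemma: if an absolutely summable family of coefficients `c i` attached to
bases `ρ i ∈ (0,1)` has all moments `∑' i, c i * ρ i ^ j` vanishing, then for each `r ∈ (0,1)`
the aggregate coefficient of the terms with `ρ i = r` vanishes. -/
lemma key_ind {ι : Type*} (c ρ : ι → ℝ)
    (hρ : ∀ i, ρ i ∈ Set.Ioo (0:ℝ) 1)
    (hs : Summable fun i => |c i|)
    (hm : ∀ j : ℕ, ∑' (i : ι), c i * ρ i ^ j = 0)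
    {r : ℝ} (hr : r ∈ Set.Ioo (0:ℝ) 1) :
    ∑' (i : ι), c i * (if ρ i = r then (1:ℝ) else 0) = 0 := by
  have habs : ∀ i, |1 - (ρ i - r)^2| ≤ 1 := by
    intro i
    have h1 := (hρ i).1; have h2 := (hρ i).2
    rw [abs_le]; constructor <;> nlinarith [hr.1, hr.2]
  have hsump : ∀ j : ℕ, Summable fun i => c i * ρ i ^ j := by
    intro j
    refine hs.of_norm_bounded fun i => ?_
    rw [norm_mul, norm_pow, Real.norm_eq_abs, Real.norm_eq_abs]
    have : |ρ i| ^ j ≤ 1 :=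
      pow_le_one₀ (abs_nonneg _) (by rw [abs_of_pos (hρ i).1]; exact (hρ i).2.le)
    nlinarith [abs_nonneg (c i)]
  have hzero : ∀ n : ℕ, ∑' (i : ι), c i * (1 - (ρ i - r)^2)^n = 0 := by
    intro n
    set Q : Polynomial ℝ := ((1 : Polynomial ℝ) - (Polynomial.X - Polynomial.C r)^2)^n with hQ
    have hev : ∀ x : ℝ, Q.eval x = (1 - (x - r)^2)^n := by intro x; simp [hQ]
    have h1 : ∀ i, c i * (1 - (ρ i - r)^2)^n
        = ∑ j ∈ Finset.range (Q.natDegree + 1), Q.coeff j * (c i * ρ i ^ j) := by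
      intro i
      rw [← hev, Polynomial.eval_eq_sum_range, Finset.mul_sum]
      exact Finset.sum_congr rfl fun j _ => by ring
    rw [tsum_congr h1, Summable.tsum_finsetSum fun j _ => (hsump j).mul_left _]
    refine Finset.sum_eq_zero fun j _ => ?_
    rw [tsum_mul_left, hm j, mul_zero]
  have hab : ∀ i, Tendsto (fun n : ℕ => c i * (1 - (ρ i - r)^2)^n) atTop
      (𝓝 (c i * (if ρ i = r then (1:ℝ) else 0))) := by
    intro i
    by_cases hir : ρ i = r
    · simp [hir, tendsto_const_nhds]
    · rw [if_neg hir, mul_zero]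
      have hlt : |1 - (ρ i - r)^2| < 1 := by
        have h1 := (hρ i).1; have h2 := (hρ i).2
        have hne : (ρ i - r) ≠ 0 := sub_ne_zero.mpr hir
        have hpos : 0 < (ρ i - r)^2 := by positivity
        rw [abs_lt]; constructor <;> nlinarith [hr.1, hr.2]
      have := tendsto_pow_atTop_nhds_zero_of_abs_lt_one hlt
      simpa using tendsto_const_nhds.mul this
  have hlim := tendsto_tsum_of_dominated_convergence (𝓕 := (atTop : Filter ℕ))
      (f := fun n i => c i * (1 - (ρ i - r)^2)^n)
      (g := fun i => c i * (if ρ i = r then (1:ℝ) else 0))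
      (bound := fun i => |c i|) hs hab ?_
  · have h0 : Tendsto (fun _ : ℕ => (0:ℝ)) atTop
        (𝓝 (∑' (i : ι), c i * (if ρ i = r then (1:ℝ) else 0))) :=
      hlim.congr hzero
    exact tendsto_nhds_unique h0 tendsto_const_nhds
  · refine Filter.Eventually.of_forall fun n => fun i => ?_
    rw [Real.norm_eq_abs, abs_mul, abs_pow]
    have : |1 - (ρ i - r)^2| ^ n ≤ 1 := pow_le_one₀ (abs_nonneg _) (habs i)
    nlinarith [abs_nonneg (c i)]

/-- Expansion of a sum over `II`. -/
lemma II_sum_expand (f : ℤ → ℝ) : ∑ s ∈ II, f s = f (-1) + f 0 + f 1 := by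
  rw [show II = {-1,0,1} from rfl, Finset.sum_insert (by decide), Finset.sum_insert (by decide),
    Finset.sum_singleton]; ring

/-- The horizontal boundary-balance coefficient of a single geometric term. -/
noncomputable def cHfun (p : ℤ → ℤ → ℝ) (h : ℤ → ℝ) (α : ℝ × ℝ → ℝ) (q : ℝ × ℝ) : ℝ :=
  α q * (q.1^2 * h (-1) + q.1 * h 0 + h 1 + q.1^2 * q.2 * p (-1) (-1)
    + q.1 * q.2 * p 0 (-1) + q.2 * p 1 (-1) - q.1)

/-- The vertical boundary-balance coefficient of a single geometric term. -/
noncomputable def cVfun (p : ℤ → ℤ → ℝ) (v : ℤ → ℝ) (α : ℝ × ℝ → ℝ) (q : ℝ × ℝ) : ℝ :=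
  α q * (q.2^2 * v (-1) + q.2 * v 0 + v 1 + q.1 * q.2^2 * p (-1) (-1)
    + q.1 * q.2 * p (-1) 0 + q.1 * p (-1) 1 - q.2)

lemma aux01 {x y : ℝ} (hx0 : 0 ≤ x) (hx1 : x ≤ 1) (hy0 : 0 ≤ y) (hy1 : y ≤ 1) :
    0 ≤ x * y ∧ x * y ≤ 1 := ⟨mul_nonneg hx0 hy0, by nlinarith⟩

/-- If the induced measure satisfies the horizontal (resp. vertical) balance equations,
then `B_h(r) = 0` for every `r ∈ (0,1)` (resp. `B_v(c) = 0` for every `c ∈ (0,1)`). -/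
theorem stmt8 (p : ℤ → ℤ → ℝ)
    (hp : ∀ s ∈ II, ∀ t ∈ II, 0 ≤ p s t)
    (hp1 : ∑ s ∈ II, ∑ t ∈ II, p s t = 1)
    (h : ℤ → ℝ) (hh : ∀ s ∈ II, 0 ≤ h s)
    (hh1 : h (-1) + h 0 + h 1 + p (-1) 1 + p 0 1 + p 1 1 = 1)
    (v : ℤ → ℝ) (hv : ∀ t ∈ II, 0 ≤ v t)
    (hv1 : v (-1) + v 0 + v 1 + p 1 (-1) + p 1 0 + p 1 1 = 1)
    (Γ : Set (ℝ × ℝ)) (hΓc : Γ.Countable)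
    (hΓU : Γ ⊆ Set.Ioo (0 : ℝ) 1 ×ˢ Set.Ioo (0 : ℝ) 1)
    (α : ℝ × ℝ → ℝ) (hα : ∀ q ∈ Γ, α q ≠ 0)
    (hconv : AbsConv Γ α) :
    (HorizontalBalance p h (inducedMeasure Γ α) →
      ∀ r ∈ Set.Ioo (0 : ℝ) 1, Bh p h Γ α r = 0) ∧
    (VerticalBalance p v (inducedMeasure Γ α) →
      ∀ c ∈ Set.Ioo (0 : ℝ) 1, Bv p v Γ α c = 0) := by
  have hΓ1 : ∀ q : Γ, (q : ℝ × ℝ).1 ∈ Set.Ioo (0:ℝ) 1 := fun q => (hΓU q.2).1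
  have hΓ2 : ∀ q : Γ, (q : ℝ × ℝ).2 ∈ Set.Ioo (0:ℝ) 1 := fun q => (hΓU q.2).2
  -- summability of |α|
  have hαsum : Summable fun q : Γ => |α q| := by
    refine hconv.of_norm_bounded fun q => ?_
    have h1 := hΓ1 q; have h2 := hΓ2 q
    have i1 : (1:ℝ) ≤ (1 - (q : ℝ × ℝ).1)⁻¹ := by
      rw [le_inv_comm₀ one_pos (by linarith [h1.2])]; linarith [h1.1]
    have i2 : (1:ℝ) ≤ (1 - (q : ℝ × ℝ).2)⁻¹ := by
      rw [le_inv_comm₀ one_pos (by linarith [h2.2])]; linarith [h2.1]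
    rw [Real.norm_eq_abs, abs_abs]
    have i0 : (0:ℝ) ≤ (1 - (q : ℝ × ℝ).1)⁻¹ := by linarith
    have s1 : |α q| * 1 ≤ |α q| * (1 - (q : ℝ × ℝ).1)⁻¹ :=
      mul_le_mul_of_nonneg_left i1 (abs_nonneg _)
    have s2 : |α q| * (1 - (q : ℝ × ℝ).1)⁻¹ * 1
        ≤ |α q| * (1 - (q : ℝ × ℝ).1)⁻¹ * (1 - (q : ℝ × ℝ).2)⁻¹ :=
      mul_le_mul_of_nonneg_left i2 (mul_nonneg (abs_nonneg _) i0)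
    linarith
  -- summability of the individual geometric terms
  have hsab : ∀ a b : ℕ, Summable fun q : Γ => α q * (q : ℝ × ℝ).1 ^ a * (q : ℝ × ℝ).2 ^ b := by
    intro a b
    refine hαsum.of_norm_bounded fun q => ?_
    have h1 := hΓ1 q; have h2 := hΓ2 q
    rw [Real.norm_eq_abs, abs_mul, abs_mul, abs_pow, abs_pow]
    have e1 : |(q : ℝ × ℝ).1| ^ a ≤ 1 :=
      pow_le_one₀ (abs_nonneg _) (by rw [abs_of_pos h1.1]; exact h1.2.le)
    have e2 : |(q : ℝ × ℝ).2| ^ b ≤ 1 :=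
      pow_le_one₀ (abs_nonneg _) (by rw [abs_of_pos h2.1]; exact h2.2.le)
    have e3 : (0:ℝ) ≤ |(q : ℝ × ℝ).1| ^ a := by positivity
    have e4 : (0:ℝ) ≤ |(q : ℝ × ℝ).2| ^ b := by positivity
    have s1 : |α ↑q| * |(q : ℝ × ℝ).1| ^ a ≤ |α ↑q| * 1 :=
      mul_le_mul_of_nonneg_left e1 (abs_nonneg _)
    have s2 : |α ↑q| * |(q : ℝ × ℝ).1| ^ a * |(q : ℝ × ℝ).2| ^ b
        ≤ |α ↑q| * |(q : ℝ × ℝ).1| ^ a * 1 :=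
      mul_le_mul_of_nonneg_left e2 (mul_nonneg (abs_nonneg _) e3)
    linarith
  -- expand hp1 and collect the elementary bounds
  have hp1' := hp1
  rw [II_sum_expand, II_sum_expand, II_sum_expand, II_sum_expand] at hp1'
  have n11 := hp (-1) (by decide) (-1) (by decide)
  have n12 := hp (-1) (by decide) 0 (by decide)
  have n13 := hp (-1) (by decide) 1 (by decide)
  have n21 := hp 0 (by decide) (-1) (by decide)
  have n22 := hp 0 (by decide) 0 (by decide)
  have n23 := hp 0 (by decide) 1 (by decide)
  have n31 := hp 1 (by decide) (-1) (by decide)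
  have n32 := hp 1 (by decide) 0 (by decide)
  have n33 := hp 1 (by decide) 1 (by decide)
  have pu11 : p (-1) (-1) ≤ 1 := by linarith
  have pu12 : p (-1) 0 ≤ 1 := by linarith
  have pu13 : p (-1) 1 ≤ 1 := by linarith
  have pu21 : p 0 (-1) ≤ 1 := by linarith
  have pu31 : p 1 (-1) ≤ 1 := by linarith
  have hhn1 := hh (-1) (by decide); have hhn2 := hh 0 (by decide); have hhn3 := hh 1 (by decide)
  have hvn1 := hv (-1) (by decide); have hvn2 := hv 0 (by decide); have hvn3 := hv 1 (by decide)
  have hhu1 : h (-1) ≤ 1 := by linarith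
  have hhu2 : h 0 ≤ 1 := by linarith
  have hhu3 : h 1 ≤ 1 := by linarith
  have hvu1 : v (-1) ≤ 1 := by linarith
  have hvu2 : v 0 ≤ 1 := by linarith
  have hvu3 : v 1 ≤ 1 := by linarith
  constructor
  · -- horizontal part
    intro HBal r hr
    -- summability of the coefficients
    have hcsum : Summable fun q : Γ => |cHfun p h α ↑q| := by
      refine Summable.of_nonneg_of_le (fun q => abs_nonneg _) (fun q => ?_) (hαsum.mul_left 7)
      have h1 := hΓ1 q; have h2 := hΓ2 q
      set x := (q : ℝ × ℝ).1 with hxdef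
      set y := (q : ℝ × ℝ).2 with hydef
      have Bx2 : 0 ≤ x^2 ∧ x^2 ≤ 1 := by
        rw [sq]; exact aux01 h1.1.le h1.2.le h1.1.le h1.2.le
      have Bt1 := aux01 Bx2.1 Bx2.2 hhn1 hhu1
      have Bt2 := aux01 h1.1.le h1.2.le hhn2 hhu2
      have Bx2y : 0 ≤ x^2*y ∧ x^2*y ≤ 1 := aux01 Bx2.1 Bx2.2 h2.1.le h2.2.le
      have Bt4 := aux01 Bx2y.1 Bx2y.2 n11 pu11
      have Bxy : 0 ≤ x*y ∧ x*y ≤ 1 := aux01 h1.1.le h1.2.le h2.1.le h2.2.le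
      have Bt5 := aux01 Bxy.1 Bxy.2 n21 pu21
      have Bt6 := aux01 h2.1.le h2.2.le n31 pu31
      have hE : |x^2 * h (-1) + x * h 0 + h 1 + x^2 * y * p (-1) (-1)
          + x * y * p 0 (-1) + y * p 1 (-1) - x| ≤ 7 := by
        obtain ⟨a1, b1⟩ := Bt1; obtain ⟨a2, b2⟩ := Bt2
        obtain ⟨a4, b4⟩ := Bt4; obtain ⟨a5, b5⟩ := Bt5; obtain ⟨a6, b6⟩ := Bt6
        rw [abs_le]
        constructor <;> linarith [h1.1, h1.2]
      calc |cHfun p h α ↑q| = |α ↑q| * |x^2 * h (-1) + x * h 0 + h 1 + x^2 * y * p (-1) (-1)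
            + x * y * p 0 (-1) + y * p 1 (-1) - x| := by
              rw [cHfun, abs_mul]
        _ ≤ |α ↑q| * 7 := mul_le_mul_of_nonneg_left hE (abs_nonneg _)
        _ = 7 * |α ↑q| := by ring
    -- the moment equations
    have hmom : ∀ j : ℕ, ∑' q : Γ, cHfun p h α ↑q * (q : ℝ × ℝ).1 ^ j = 0 := by
      intro j
      have hb := HBal (j+1) (by omega)
      rw [II_sum_expand, II_sum_expand] at hb
      rw [show (((j+1 : ℕ) : ℤ) - (-1)).toNat = j + 2 from by omega,
        show (((j+1 : ℕ) : ℤ) - 0).toNat = j + 1 from by omega,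
        show (((j+1 : ℕ) : ℤ) - 1).toNat = j from by omega] at hb
      have hfun : (fun q : Γ => cHfun p h α ↑q * (q : ℝ × ℝ).1 ^ j)
          = fun q : Γ => α ↑q * (q : ℝ × ℝ).1 ^ (j+2) * (q : ℝ × ℝ).2 ^ 1 * p (-1) (-1)
            + α ↑q * (q : ℝ × ℝ).1 ^ (j+1) * (q : ℝ × ℝ).2 ^ 1 * p 0 (-1)
            + α ↑q * (q : ℝ × ℝ).1 ^ j * (q : ℝ × ℝ).2 ^ 1 * p 1 (-1)
            + α ↑q * (q : ℝ × ℝ).1 ^ (j+2) * (q : ℝ × ℝ).2 ^ 0 * h (-1)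
            + α ↑q * (q : ℝ × ℝ).1 ^ (j+1) * (q : ℝ × ℝ).2 ^ 0 * h 0
            + α ↑q * (q : ℝ × ℝ).1 ^ j * (q : ℝ × ℝ).2 ^ 0 * h 1
            - α ↑q * (q : ℝ × ℝ).1 ^ (j+1) * (q : ℝ × ℝ).2 ^ 0 := by
        funext q; rw [cHfun]; ring
      have H : HasSum (fun q : Γ => cHfun p h α ↑q * (q : ℝ × ℝ).1 ^ j)
          (inducedMeasure Γ α (j+2) 1 * p (-1) (-1) + inducedMeasure Γ α (j+1) 1 * p 0 (-1)
            + inducedMeasure Γ α j 1 * p 1 (-1) + inducedMeasure Γ α (j+2) 0 * h (-1)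
            + inducedMeasure Γ α (j+1) 0 * h 0 + inducedMeasure Γ α j 0 * h 1
            - inducedMeasure Γ α (j+1) 0) := by
        rw [hfun]
        have S1 := (hsab (j+2) 1).hasSum.mul_right (p (-1) (-1))
        have S2 := (hsab (j+1) 1).hasSum.mul_right (p 0 (-1))
        have S3 := (hsab j 1).hasSum.mul_right (p 1 (-1))
        have S4 := (hsab (j+2) 0).hasSum.mul_right (h (-1))
        have S5 := (hsab (j+1) 0).hasSum.mul_right (h 0)
        have S6 := (hsab j 0).hasSum.mul_right (h 1)
        have S7 := (hsab (j+1) 0).hasSum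
        exact (((((S1.add S2).add S3).add S4).add S5).add S6).sub S7
      rw [H.tsum_eq]; linarith [hb]
    have hk := key_ind (fun q : Γ => cHfun p h α ↑q) (fun q : Γ => (q : ℝ × ℝ).1)
      hΓ1 hcsum hmom hr
    have h1 : Bh p h Γ α r
        = ∑' q : Γ, cHfun p h α ↑q * (if (q : ℝ × ℝ).1 = r then (1:ℝ) else 0) := by
      have hinj : Function.Injective
          (fun a : {q : ℝ × ℝ // q ∈ Γ ∧ q.1 = r} => (⟨a.1, a.2.1⟩ : Γ)) := by
        intro a b hab
        apply Subtype.ext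
        simpa using congrArg Subtype.val hab
      have hsupp : Function.support
            (fun q : Γ => cHfun p h α ↑q * (if (q : ℝ × ℝ).1 = r then (1:ℝ) else 0))
          ⊆ Set.range (fun a : {q : ℝ × ℝ // q ∈ Γ ∧ q.1 = r} => (⟨a.1, a.2.1⟩ : Γ)) := by
        intro q hq
        by_cases h' : (q : ℝ × ℝ).1 = r
        · exact ⟨⟨↑q, q.2, h'⟩, rfl⟩
        · simp [Function.mem_support, h'] at hq
      refine Eq.trans (tsum_congr ?_) (hinj.tsum_eq hsupp)
      rintro ⟨q, hqΓ, hqr⟩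
      subst hqr
      rw [II_sum_expand]
      rw [if_pos rfl, mul_one, cHfun]
      simp only [show ((1:ℤ) - -1).toNat = 2 from rfl, show ((1:ℤ) - 0).toNat = 1 from rfl,
        show ((1:ℤ) - 1).toNat = 0 from rfl, pow_one, pow_zero]
      ring
    rw [h1]; exact hk
  · -- vertical part
    intro VBal c hc
    have hcsum : Summable fun q : Γ => |cVfun p v α ↑q| := by
      refine Summable.of_nonneg_of_le (fun q => abs_nonneg _) (fun q => ?_) (hαsum.mul_left 7)
      have h1 := hΓ1 q; have h2 := hΓ2 q
      set x := (q : ℝ × ℝ).1 with hxdef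
      set y := (q : ℝ × ℝ).2 with hydef
      have By2 : 0 ≤ y^2 ∧ y^2 ≤ 1 := by
        rw [sq]; exact aux01 h2.1.le h2.2.le h2.1.le h2.2.le
      have Bt1 := aux01 By2.1 By2.2 hvn1 hvu1
      have Bt2 := aux01 h2.1.le h2.2.le hvn2 hvu2
      have Bxy2 : 0 ≤ x*y^2 ∧ x*y^2 ≤ 1 := aux01 h1.1.le h1.2.le By2.1 By2.2
      have Bt4 := aux01 Bxy2.1 Bxy2.2 n11 pu11
      have Bxy : 0 ≤ x*y ∧ x*y ≤ 1 := aux01 h1.1.le h1.2.le h2.1.le h2.2.le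
      have Bt5 := aux01 Bxy.1 Bxy.2 n12 pu12
      have Bt6 := aux01 h1.1.le h1.2.le n13 pu13
      have hE : |y^2 * v (-1) + y * v 0 + v 1 + x * y^2 * p (-1) (-1)
          + x * y * p (-1) 0 + x * p (-1) 1 - y| ≤ 7 := by
        obtain ⟨a1, b1⟩ := Bt1; obtain ⟨a2, b2⟩ := Bt2
        obtain ⟨a4, b4⟩ := Bt4; obtain ⟨a5, b5⟩ := Bt5; obtain ⟨a6, b6⟩ := Bt6
        rw [abs_le]
        constructor <;> linarith [h2.1, h2.2]
      calc |cVfun p v α ↑q| = |α ↑q| * |y^2 * v (-1) + y * v 0 + v 1 + x * y^2 * p (-1) (-1)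
            + x * y * p (-1) 0 + x * p (-1) 1 - y| := by
              rw [cVfun, abs_mul]
        _ ≤ |α ↑q| * 7 := mul_le_mul_of_nonneg_left hE (abs_nonneg _)
        _ = 7 * |α ↑q| := by ring
    have hmom : ∀ j : ℕ, ∑' q : Γ, cVfun p v α ↑q * (q : ℝ × ℝ).2 ^ j = 0 := by
      intro j
      have hb := VBal (j+1) (by omega)
      rw [II_sum_expand, II_sum_expand] at hb
      rw [show (((j+1 : ℕ) : ℤ) - (-1)).toNat = j + 2 from by omega,
        show (((j+1 : ℕ) : ℤ) - 0).toNat = j + 1 from by omega,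
        show (((j+1 : ℕ) : ℤ) - 1).toNat = j from by omega] at hb
      have hfun : (fun q : Γ => cVfun p v α ↑q * (q : ℝ × ℝ).2 ^ j)
          = fun q : Γ => α ↑q * (q : ℝ × ℝ).1 ^ 1 * (q : ℝ × ℝ).2 ^ (j+2) * p (-1) (-1)
            + α ↑q * (q : ℝ × ℝ).1 ^ 1 * (q : ℝ × ℝ).2 ^ (j+1) * p (-1) 0
            + α ↑q * (q : ℝ × ℝ).1 ^ 1 * (q : ℝ × ℝ).2 ^ j * p (-1) 1
            + α ↑q * (q : ℝ × ℝ).1 ^ 0 * (q : ℝ × ℝ).2 ^ (j+2) * v (-1)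
            + α ↑q * (q : ℝ × ℝ).1 ^ 0 * (q : ℝ × ℝ).2 ^ (j+1) * v 0
            + α ↑q * (q : ℝ × ℝ).1 ^ 0 * (q : ℝ × ℝ).2 ^ j * v 1
            - α ↑q * (q : ℝ × ℝ).1 ^ 0 * (q : ℝ × ℝ).2 ^ (j+1) := by
        funext q; rw [cVfun]; ring
      have H : HasSum (fun q : Γ => cVfun p v α ↑q * (q : ℝ × ℝ).2 ^ j)
          (inducedMeasure Γ α 1 (j+2) * p (-1) (-1) + inducedMeasure Γ α 1 (j+1) * p (-1) 0
            + inducedMeasure Γ α 1 j * p (-1) 1 + inducedMeasure Γ α 0 (j+2) * v (-1)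
            + inducedMeasure Γ α 0 (j+1) * v 0 + inducedMeasure Γ α 0 j * v 1
            - inducedMeasure Γ α 0 (j+1)) := by
        rw [hfun]
        have S1 := (hsab 1 (j+2)).hasSum.mul_right (p (-1) (-1))
        have S2 := (hsab 1 (j+1)).hasSum.mul_right (p (-1) 0)
        have S3 := (hsab 1 j).hasSum.mul_right (p (-1) 1)
        have S4 := (hsab 0 (j+2)).hasSum.mul_right (v (-1))
        have S5 := (hsab 0 (j+1)).hasSum.mul_right (v 0)
        have S6 := (hsab 0 j).hasSum.mul_right (v 1)
        have S7 := (hsab 0 (j+1)).hasSum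
        exact (((((S1.add S2).add S3).add S4).add S5).add S6).sub S7
      rw [H.tsum_eq]; linarith [hb]
    have hk := key_ind (fun q : Γ => cVfun p v α ↑q) (fun q : Γ => (q : ℝ × ℝ).2)
      hΓ2 hcsum hmom hc
    have h1 : Bv p v Γ α c
        = ∑' q : Γ, cVfun p v α ↑q * (if (q : ℝ × ℝ).2 = c then (1:ℝ) else 0) := by
      have hinj : Function.Injective
          (fun a : {q : ℝ × ℝ // q ∈ Γ ∧ q.2 = c} => (⟨a.1, a.2.1⟩ : Γ)) := by
        intro a b hab
        apply Subtype.ext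
        simpa using congrArg Subtype.val hab
      have hsupp : Function.support
            (fun q : Γ => cVfun p v α ↑q * (if (q : ℝ × ℝ).2 = c then (1:ℝ) else 0))
          ⊆ Set.range (fun a : {q : ℝ × ℝ // q ∈ Γ ∧ q.2 = c} => (⟨a.1, a.2.1⟩ : Γ)) := by
        intro q hq
        by_cases h' : (q : ℝ × ℝ).2 = c
        · exact ⟨⟨↑q, q.2, h'⟩, rfl⟩
        · simp [Function.mem_support, h'] at hq
      refine Eq.trans (tsum_congr ?_) (hinj.tsum_eq hsupp)
      rintro ⟨q, hqΓ, hqc⟩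
      subst hqc
      rw [II_sum_expand]
      rw [if_pos rfl, mul_one, cVfun]
      simp only [show ((1:ℤ) - -1).toNat = 2 from rfl, show ((1:ℤ) - 0).toNat = 1 from rfl,
        show ((1:ℤ) - 1).toNat = 0 from rfl, pow_one, pow_zero]
      ring
    rw [h1]; exact hk
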